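/- Every λQ term M reduces by π-steps to its kernel image M^▽, and M^▽ is a π-normal form. -/

import Mathlib

namespace Paper

mutual
/-- Terms of the simplified LJQ calculus λQ. -/
inductive QTm : Type
| up : QVal → QTm
| li : String → QVal → String → QTm → QTm
| cut : QTm → String → QTm → QTm
/-- Values of λQ. -/
inductive QVal : Type
| var : String → QVal
| lam : String → QTm → QVal
end

mutual
def QTm.fv : QTm → Finset String
| .up V => QVal.fv V
| .li x V y N => {x} ∪ QVal.fv V ∪ (QTm.fv N \ {y})
| .cut M x N => QTm.fv M ∪ (QTm.fv N \ {x})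
def QVal.fv : QVal → Finset String
| .var x => {x}
| .lam x M => QTm.fv M \ {x}
end

mutual
/-- Value substitution [V/y]- on λQ values. -/
def QVal.substV (V : QVal) (y : String) : QVal → QVal
| .var z => if z = y then V else .var z
| .lam z M => if z = y then .lam z M else .lam z (QTm.substT V y M)
/-- Value substitution [V/y]- on λQ terms, with the critical clauses on y(W,z.P). -/
def QTm.substT (V : QVal) (y : String) : QTm → QTm
| .up W => .up (QVal.substV V y W)
| .li x W z P =>
    if x = y then
      match V with
      | .var v => .li v (QVal.substV V y W) z (if z = y then P else QTm.substT V y P)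
      | .lam a M => .cut (.up (.lam a M)) y
          (.li y (QVal.substV V y W) z (if z = y then P else QTm.substT V y P))
    else .li x (QVal.substV V y W) z (if z = y then P else QTm.substT V y P)
| .cut M x N => .cut (QTm.substT V y M) x (if x = y then N else QTm.substT V y N)
end

/-- Names for the reduction rules of λQ. -/
inductive QRule | bv | sigmav | etacut | pi1 | pi2

/-- A Bv-redex of λQ. -/
def IsBvRedex : QTm → Prop := fun t =>
  ∃ x M y V z N, t = .cut (.up (.lam x M)) y (.li y V z N)
    ∧ y ∉ QVal.fv V ∧ y ∉ QTm.fv N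

mutual
/-- One-step rule-tagged reduction of λQ on terms, closed under all contexts. -/
inductive QStepT : QRule → QTm → QTm → Prop
| bv {x M y V z N} : y ∉ QVal.fv V → y ∉ QTm.fv N →
    QStepT .bv (.cut (.up (.lam x M)) y (.li y V z N)) (.cut (.cut (.up V) x M) z N)
| sigmav {V y N} : ¬ IsBvRedex (.cut (.up V) y N) →
    QStepT .sigmav (.cut (.up V) y N) (QTm.substT V y N)
| etacut {M x} : QStepT .etacut (.cut M x (.up (.var x))) M
| pi1 {z V y P x N} : QStepT .pi1 (.cut (.li z V y P) x N) (.li z V y (.cut P x N))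
| pi2 {M y P x N} : QStepT .pi2 (.cut (.cut M y P) x N) (.cut M y (.cut P x N))
| upC {r V V'} : QStepV r V V' → QStepT r (.up V) (.up V')
| liC1 {r x V V' y N} : QStepV r V V' → QStepT r (.li x V y N) (.li x V' y N)
| liC2 {r x V y N N'} : QStepT r N N' → QStepT r (.li x V y N) (.li x V y N')
| cutL {r M M' x N} : QStepT r M M' → QStepT r (.cut M x N) (.cut M' x N)
| cutR {r M x N N'} : QStepT r N N' → QStepT r (.cut M x N) (.cut M x N')
/-- One-step rule-tagged reduction of λQ on values. -/
inductive QStepV : QRule → QVal → QVal → Prop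
| lamC {r x M M'} : QStepT r M M' → QStepV r (.lam x M) (.lam x M')
end

mutual
/-- Terms of the kernel LNF of λQ (as a predicate on λQ terms: every cut is
of the form C(↑V, x.N)). -/
inductive LNFt : QTm → Prop
| up {V} : LNFv V → LNFt (.up V)
| li {x V y N} : LNFv V → LNFt N → LNFt (.li x V y N)
| cut {V x N} : LNFv V → LNFt N → LNFt (.cut (.up V) x N)
/-- Values of LNF. -/
inductive LNFv : QVal → Prop
| var {x} : LNFv (.var x)
| lam {x M} : LNFt M → LNFv (.lam x M)
end

/-- The generalized left-permuted cut C(M : x.N), defined by recursion on M. -/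
def gcut : QTm → String → QTm → QTm
| .up V, x, N => .cut (.up V) x N
| .li z V y P, x, N => .li z V y (gcut P x N)
| .cut A y P, x, N => .cut A y (gcut P x N)

/-- A π-step of λQ (a π₁- or π₂-step). -/
def PiStep (a b : QTm) : Prop := QStepT .pi1 a b ∨ QStepT .pi2 a b

mutual
/-- The map (-)^▽ from λQ into its kernel LNF (terms). -/
def QTm.knl : QTm → QTm
| .up V => .up (QVal.knl V)
| .li x V y N => .li x (QVal.knl V) y (QTm.knl N)
| .cut M x N => gcut (QTm.knl M) x (QTm.knl N)
/-- The map (-)^▽▽ on values. -/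
def QVal.knl : QVal → QVal
| .var x => .var x
| .lam x M => .lam x (QTm.knl M)
end

/-- π-steps on values. -/
def PiStepV (a b : QVal) : Prop := QStepV .pi1 a b ∨ QStepV .pi2 a b

theorem liftT {f : QTm → QTm} (hf : ∀ r a b, QStepT r a b → QStepT r (f a) (f b))
    {a b : QTm} (h : Relation.ReflTransGen PiStep a b) :
    Relation.ReflTransGen PiStep (f a) (f b) :=
  Relation.ReflTransGen.lift f (fun _ _ hab => hab.imp (hf _ _ _) (hf _ _ _)) _ _ h

theorem liftV {f : QVal → QTm} (hf : ∀ r a b, QStepV r a b → QStepT r (f a) (f b))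
    {a b : QVal} (h : Relation.ReflTransGen PiStepV a b) :
    Relation.ReflTransGen PiStep (f a) (f b) :=
  Relation.ReflTransGen.lift f (fun _ _ hab => hab.imp (hf _ _ _) (hf _ _ _)) _ _ h

theorem cut_to_gcut : ∀ (M : QTm) (x : String) (N : QTm),
    Relation.ReflTransGen PiStep (.cut M x N) (gcut M x N)
  | .up _, _, _ => .refl
  | .li z V y P, x, N =>
      .head (Or.inl .pi1) (liftT (fun _ _ _ h => QStepT.liC2 h) (cut_to_gcut P x N))
  | .cut A y P, x, N =>
      .head (Or.inr .pi2) (liftT (fun _ _ _ h => QStepT.cutR h) (cut_to_gcut P x N))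

mutual
theorem redT : ∀ M : QTm, Relation.ReflTransGen PiStep M (QTm.knl M)
  | .up V => liftV (fun _ _ _ h => QStepT.upC h) (redV V)
  | .li x V y N =>
      .trans (liftV (fun _ _ _ h => QStepT.liC1 h) (redV V))
             (liftT (fun _ _ _ h => QStepT.liC2 h) (redT N))
  | .cut M x N =>
      .trans (liftT (fun _ _ _ h => QStepT.cutL h) (redT M))
        (.trans (liftT (fun _ _ _ h => QStepT.cutR h) (redT N))
          (cut_to_gcut (QTm.knl M) x (QTm.knl N)))
theorem redV : ∀ V : QVal, Relation.ReflTransGen PiStepV V (QVal.knl V)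
  | .var _ => .refl
  | .lam x M =>
      Relation.ReflTransGen.lift (fun M => QVal.lam x M)
        (fun _ _ hab => hab.imp (fun h => .lamC h) (fun h => .lamC h)) _ _ (redT M)
end

theorem gcut_lnf : ∀ {M : QTm}, LNFt M → ∀ (x : String) {N : QTm}, LNFt N →
    LNFt (gcut M x N)
  | _, .up hV, _, _, hN => .cut hV hN
  | _, .li hV hP, x, _, hN => .li hV (gcut_lnf hP x hN)
  | _, .cut hV hP, x, _, hN => .cut hV (gcut_lnf hP x hN)

mutual
theorem knlT : ∀ M : QTm, LNFt (QTm.knl M)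
  | .up V => .up (knlV V)
  | .li _ V _ N => .li (knlV V) (knlT N)
  | .cut M x N => gcut_lnf (knlT M) x (knlT N)
theorem knlV : ∀ V : QVal, LNFv (QVal.knl V)
  | .var _ => .var
  | .lam _ M => .lam (knlT M)
end

mutual
theorem noT : ∀ {r t t'}, QStepT r t t' → (r = QRule.pi1 ∨ r = QRule.pi2) →
    LNFt t → False
  | _, _, _, .bv _ _, hr, _ => by rcases hr with h | h <;> cases h
  | _, _, _, .sigmav _, hr, _ => by rcases hr with h | h <;> cases h
  | _, _, _, .etacut, hr, _ => by rcases hr with h | h <;> cases h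
  | _, _, _, .pi1, _, hl => by cases hl
  | _, _, _, .pi2, _, hl => by cases hl
  | _, _, _, .upC s, hr, hl => by cases hl with | up hV => exact noV s hr hV
  | _, _, _, .liC1 s, hr, hl => by cases hl with | li hV hN => exact noV s hr hV
  | _, _, _, .liC2 s, hr, hl => by cases hl with | li hV hN => exact noT s hr hN
  | _, _, _, .cutL s, hr, hl => by cases hl with | cut hV hN => exact noT s hr (.up hV)
  | _, _, _, .cutR s, hr, hl => by cases hl with | cut hV hN => exact noT s hr hN
theorem noV : ∀ {r V V'}, QStepV r V V' → (r = QRule.pi1 ∨ r = QRule.pi2) →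
    LNFv V → False
  | _, _, _, .lamC s, hr, hl => by cases hl with | lam hM => exact noT s hr hM
end

/-- every λQ term M reduces by π-steps to M^▽, and M^▽ is a
π-normal form. -/
theorem stmt7 (M : QTm) :
    Relation.ReflTransGen PiStep M (QTm.knl M) ∧ ¬ ∃ N, PiStep (QTm.knl M) N := by
  refine ⟨redT M, ?_⟩
  rintro ⟨N, h | h⟩
  · exact noT h (Or.inl rfl) (knlT M)
  · exact noT h (Or.inr rfl) (knlT M)

end Paper
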